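/- (Invariant ring via unlocalization.) Under the Assumption, suppose B ⊆ R^G is a finitely generated K-subalgebra such that R_a^G = B_a for some nonzero a ∈ B. Define an ascending chain of subalgebras B_0 ⊆ B_1 ⊆ B_2 ⊆ … of R by B_0 := B and B_{k+1} := the subalgebra generated by a^{−1}B_k ∩ R. Then R^G = ∪_{k≥0} B_k. If K is Noetherian, then every B_k is a finitely generated K-algebra. If B_k = B_{k+1} for some k, then R^G = B_k. Conversely, if R^G is finitely generated as a K-algebra, then such a k exists. -/

import Mathlib

open MvPolynomial
noncomputable section

namespace Derksen

variable {L : Type*} [Field L]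

/-- Coefficient-wise action of a group element on a multivariate polynomial
(the variables are fixed). -/
def polyAct (G : Type*) [Group G] [MulSemiringAction G L] {n : ℕ} (σ : G)
    (f : MvPolynomial (Fin n) L) : MvPolynomial (Fin n) L :=
  MvPolynomial.map (MulSemiringAction.toRingHom G L σ) f

/-- The Derksen ideal `D_{a_1,…,a_n} = ⋂_{σ ∈ G} (y_1 − σ·a_1, …, y_n − σ·a_n)`. -/
def derksenIdeal (G : Type*) [Group G] [MulSemiringAction G L] {n : ℕ}
    (a : Fin n → L) : Ideal (MvPolynomial (Fin n) L) :=
  ⨅ σ : G, Ideal.span (Set.range fun i => X i - C (σ • a i))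

/-- The leading monomial of a multivariate polynomial with respect to a
monomial order (it is `0` for the zero polynomial). -/
def lm {n : ℕ} (m : MonomialOrder (Fin n)) {S : Type*} [CommSemiring S]
    (f : MvPolynomial (Fin n) S) : Fin n →₀ ℕ :=
  m.toSyn.symm (f.support.sup fun d => m.toSyn d)

/-- The leading coefficient with respect to a monomial order. -/
def lc {n : ℕ} (m : MonomialOrder (Fin n)) {S : Type*} [CommSemiring S]
    (f : MvPolynomial (Fin n) S) : S :=
  f.coeff (lm m f)

/-- A (finite) Gröbner basis of an ideal of a polynomial ring over a field,
with respect to a monomial order: it consists of nonzero elements of the ideal,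
generates it, and the leading monomial of every nonzero element of the ideal is
divisible by the leading monomial of some basis element. -/
structure IsGroebnerBasis {n : ℕ} (m : MonomialOrder (Fin n))
    (E : Ideal (MvPolynomial (Fin n) L)) (B : Finset (MvPolynomial (Fin n) L)) : Prop where
  zero_not_mem : (0 : MvPolynomial (Fin n) L) ∉ B
  subset : (B : Set (MvPolynomial (Fin n) L)) ⊆ E
  span_eq : Ideal.span (B : Set (MvPolynomial (Fin n) L)) = E
  lm_dvd : ∀ f ∈ E, f ≠ 0 → ∃ g ∈ B, lm m g ≤ lm m f

/-- A reduced Gröbner basis: all elements are monic and no monomial occurring in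
a basis element is divisible by the leading monomial of another basis element. -/
structure IsReducedGroebnerBasis {n : ℕ} (m : MonomialOrder (Fin n))
    (E : Ideal (MvPolynomial (Fin n) L)) (B : Finset (MvPolynomial (Fin n) L))
    extends IsGroebnerBasis m E B : Prop where
  monic : ∀ g ∈ B, lc m g = 1
  reduced : ∀ g ∈ B, ∀ g' ∈ B, g' ≠ g → ∀ d ∈ g.support, ¬ lm m g' ≤ d

/-- The `K`-subalgebra of `L` (as a subring) generated by the coefficients of
the polynomials of `B`. -/
def coeffAlgebra (K : Subring L) {n : ℕ} (B : Finset (MvPolynomial (Fin n) L)) :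
    Subring L :=
  Subring.closure (↑K ∪ {x : L | ∃ g ∈ B, ∃ d : Fin n →₀ ℕ, coeff d g = x})

end Derksen

namespace Derksen

/-- **Invariant ring via unlocalization.**  Under the Assumption,
let `B ⊆ R^G` be a finitely generated `K`-subalgebra with `R^G_{a₀} = B_{a₀}`
for a nonzero `a₀ ∈ B`, and let `B₀ ⊆ B₁ ⊆ …` be the chain with `B₀ = B` and
`B_{k+1}` the (K-)subalgebra generated by `a₀⁻¹ B_k ∩ R`.  Then
`R^G = ⋃ₖ B_k`; if `K` is Noetherian every `B_k` is a finitely generated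
`K`-algebra; if `B_k = B_{k+1}` for some `k` then `R^G = B_k`; and if `R^G` is a
finitely generated `K`-algebra then such a `k` exists. -/
theorem statement6 {L G : Type*} [Field L] [Group G] [MulSemiringAction G L]
    {n : ℕ} (K : Subring L) (a : Fin n → L)
    (hK : ∀ (σ : G), ∀ x ∈ K, σ • x = x)
    (R : Subring L) (hR : R = Subring.closure (↑K ∪ Set.range a))
    (hRstable : ∀ (σ : G), ∀ x ∈ R, σ • x ∈ R)
    (hQuot : ∀ x : L, ∃ r ∈ R, ∃ s ∈ R, s ≠ 0 ∧ x = r / s)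
    (E : Ideal (MvPolynomial (Fin n) L))
    (hEproper : E ≠ ⊤)
    (hDE : derksenIdeal G a ≤ E)
    (hEstable : ∀ (σ : G), ∀ f ∈ E, polyAct G σ f ∈ E)
    (m : MonomialOrder (Fin n)) (Gb : Finset (MvPolynomial (Fin n) L))
    (hGb : IsReducedGroebnerBasis m E Gb)
    -- the invariant ring R^G and the localizations R^G_{a₀}, B_{a₀} inside L
    (RG : Subring L) (hRG : RG = R ⊓ (FixedPoints.subfield G L).toSubring)
    (B : Subring L) (hBK : ↑K ⊆ (B : Set L)) (hBRG : B ≤ RG)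
    (hBfg : ∃ s : Finset L, B = Subring.closure (↑K ∪ ↑s))
    (a₀ : L) (ha₀B : a₀ ∈ B) (ha₀ : a₀ ≠ 0)
    (hloc : Subring.closure (↑RG ∪ {a₀⁻¹}) = Subring.closure (↑B ∪ {a₀⁻¹}))
    -- the ascending chain B₀ ⊆ B₁ ⊆ ⋯
    (Bc : ℕ → Subring L)
    (hBc0 : Bc 0 = B)
    (hBcSucc : ∀ k : ℕ,
      Bc (k + 1) = Subring.closure (↑K ∪ {x : L | x ∈ R ∧ a₀ * x ∈ Bc k})) :
    ((RG : Set L) = ⋃ k : ℕ, ↑(Bc k)) ∧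
    (IsNoetherianRing ↥K → ∀ k : ℕ, ∃ s : Finset L,
        Bc k = Subring.closure (↑K ∪ ↑s)) ∧
    (∀ k : ℕ, Bc k = Bc (k + 1) → RG = Bc k) ∧
    ((∃ s : Finset L, RG = Subring.closure (↑K ∪ ↑s)) →
      ∃ k : ℕ, Bc k = Bc (k + 1)) := by
  classical
  have hKsubR : (K : Set L) ⊆ (R : Set L) := by
    rw [hR]; exact fun x hx => Subring.subset_closure (Or.inl hx)
  have hRGdef : ∀ x : L, x ∈ RG ↔ x ∈ R ∧ ∀ σ : G, σ • x = x := by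
    intro x
    rw [hRG, Subring.mem_inf, Subfield.mem_toSubring]
    have : x ∈ FixedPoints.subfield G L ↔ x ∈ MulAction.fixedPoints G L := Iff.rfl
    rw [this, MulAction.mem_fixedPoints]
  have hfix : ∀ x ∈ RG, ∀ σ : G, σ • x = x := fun x hx => ((hRGdef x).1 hx).2
  have hRGsubR : ∀ x ∈ RG, x ∈ R := fun x hx => ((hRGdef x).1 hx).1
  have hKsubRG : (K : Set L) ⊆ (RG : Set L) := fun x hx =>
    (hRGdef x).2 ⟨hKsubR hx, fun σ => hK σ x hx⟩
  have ha₀RG : a₀ ∈ RG := hBRG ha₀B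
  have ha₀fix : ∀ σ : G, σ • a₀ = a₀ := hfix a₀ ha₀RG
  have hchain : ∀ k : ℕ, Bc k ≤ RG ∧ a₀ ∈ Bc k := by
    intro k
    induction k with
    | zero => rw [hBc0]; exact ⟨hBRG, ha₀B⟩
    | succ k ih =>
      have hsub : Bc (k + 1) ≤ RG := by
        rw [hBcSucc k]
        apply Subring.closure_le.mpr
        rintro x (hx | ⟨hxR, hxa⟩)
        · exact hKsubRG hx
        · refine (hRGdef x).2 ⟨hxR, fun σ => ?_⟩
          have h1 : σ • (a₀ * x) = a₀ * x := hfix _ (ih.1 hxa) σ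
          have h2 : σ • a₀ * σ • x = a₀ * x := by rw [← smul_mul']; exact h1
          rw [ha₀fix σ] at h2
          exact mul_left_cancel₀ ha₀ h2
      refine ⟨hsub, ?_⟩
      rw [hBcSucc k]
      exact Subring.subset_closure
        (Or.inr ⟨hRGsubR a₀ ha₀RG, mul_mem ih.2 ih.2⟩)
  have hmono : ∀ k, Bc k ≤ Bc (k + 1) := by
    intro k
    intro x hx
    rw [hBcSucc k]
    exact Subring.subset_closure
      (Or.inr ⟨hRGsubR x ((hchain k).1 hx), mul_mem (hchain k).2 hx⟩)
  have hmono' : Monotone Bc := monotone_nat_of_le_succ hmono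
  have hKBc : ∀ k, (K : Set L) ⊆ (Bc k : Set L) := by
    intro k
    cases k with
    | zero => rw [hBc0]; exact hBK
    | succ k =>
      rw [hBcSucc k]; exact fun x hx => Subring.subset_closure (Or.inl hx)
  have hup : ∀ k : ℕ, ∀ x : L, x ∈ RG → a₀ ^ k * x ∈ B → x ∈ Bc k := by
    intro k
    induction k with
    | zero =>
      intro x _ h
      rw [pow_zero, one_mul] at h
      rw [hBc0]; exact h
    | succ k ih =>
      intro x hx h
      have hax : a₀ * x ∈ Bc k := by
        apply ih (a₀ * x) (mul_mem ha₀RG hx)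
        have : a₀ ^ k * (a₀ * x) = a₀ ^ (k + 1) * x := by ring
        rw [this]; exact h
      rw [hBcSucc k]
      exact Subring.subset_closure (Or.inr ⟨hRGsubR x hx, hax⟩)
  have hdenom : ∀ x ∈ Subring.closure ((B : Set L) ∪ {a₀⁻¹}),
      ∃ k : ℕ, a₀ ^ k * x ∈ B := by
    intro x hx
    induction hx using Subring.closure_induction with
    | mem x hx =>
      rcases hx with hx | hx
      · exact ⟨0, by rwa [pow_zero, one_mul]⟩
      · refine ⟨1, ?_⟩
        rw [Set.mem_singleton_iff] at hx
        subst hx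
        rw [pow_one, mul_inv_cancel₀ ha₀]
        exact B.one_mem
    | zero => exact ⟨0, by simpa using B.zero_mem⟩
    | one => exact ⟨0, by simpa using B.one_mem⟩
    | add x y hx hy ihx ihy =>
      obtain ⟨k1, h1⟩ := ihx
      obtain ⟨k2, h2⟩ := ihy
      refine ⟨k1 + k2, ?_⟩
      have : a₀ ^ (k1 + k2) * (x + y)
          = a₀ ^ k2 * (a₀ ^ k1 * x) + a₀ ^ k1 * (a₀ ^ k2 * y) := by ring
      rw [this]
      exact add_mem (mul_mem (pow_mem ha₀B k2) h1) (mul_mem (pow_mem ha₀B k1) h2)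
    | neg x hx ihx =>
      obtain ⟨k, h⟩ := ihx
      exact ⟨k, by rw [mul_neg]; exact neg_mem h⟩
    | mul x y hx hy ihx ihy =>
      obtain ⟨k1, h1⟩ := ihx
      obtain ⟨k2, h2⟩ := ihy
      refine ⟨k1 + k2, ?_⟩
      have : a₀ ^ (k1 + k2) * (x * y) = (a₀ ^ k1 * x) * (a₀ ^ k2 * y) := by ring
      rw [this]
      exact mul_mem h1 h2
  have hunion : (RG : Set L) = ⋃ k : ℕ, (Bc k : Set L) := by
    apply Set.Subset.antisymm
    · intro x hx
      have hx' : x ∈ Subring.closure ((B : Set L) ∪ {a₀⁻¹}) := by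
        rw [← hloc]; exact Subring.subset_closure (Or.inl hx)
      obtain ⟨k, hk⟩ := hdenom x hx'
      exact Set.mem_iUnion.mpr ⟨k, hup k x hx hk⟩
    · intro x hx
      obtain ⟨k, hk⟩ := Set.mem_iUnion.mp hx
      exact (hchain k).1 hk
  refine ⟨hunion, ?_, ?_, ?_⟩
  · -- Noetherian implies each Bc k is f.g.
    intro hNoe k
    induction k with
    | zero => rw [hBc0]; exact hBfg
    | succ k ih =>
      obtain ⟨t, ht⟩ := ih
      haveI hNk : IsNoetherianRing ↥(Bc k) := by
        rw [ht]
        have e : (Algebra.adjoin ↥K ((t : Set L))).toSubring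
            = Subring.closure ((K : Set L) ∪ (t : Set L)) := by
          rw [Algebra.adjoin_eq_ring_closure]
          have hr : Set.range ⇑(algebraMap (↥K) L) = (K : Set L) := by
            ext x
            constructor
            · rintro ⟨y, rfl⟩; exact y.2
            · intro hx; exact ⟨⟨x, hx⟩, rfl⟩
          rw [hr]
        rw [← e]
        exact isNoetherianRing_of_fg (Subalgebra.fg_def.2 ⟨↑t, t.finite_toSet, rfl⟩)
      have hBcR : ∀ x ∈ Bc k, x ∈ R := fun x hx => hRGsubR x ((hchain k).1 hx)
      let J : Ideal ↥(Bc k) :=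
        { carrier := {z | ∃ x, x ∈ R ∧ a₀ * x = (z : L)}
          add_mem' := by
            rintro z w ⟨x, hxR, hx⟩ ⟨y, hyR, hy⟩
            refine ⟨x + y, R.add_mem hxR hyR, ?_⟩
            have : ((z + w : ↥(Bc k)) : L) = (z : L) + (w : L) := rfl
            rw [this, mul_add, hx, hy]
          zero_mem' := ⟨0, R.zero_mem, by simp⟩
          smul_mem' := by
            rintro c z ⟨x, hxR, hx⟩
            refine ⟨(c : L) * x, R.mul_mem (hBcR c c.2) hxR, ?_⟩
            have : ((c • z : ↥(Bc k)) : L) = (c : L) * (z : L) := rfl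
            rw [this, ← hx]; ring }
      obtain ⟨sJ, hsJ⟩ := IsNoetherian.noetherian (R := ↥(Bc k)) J
      have hsJmem : ∀ z ∈ sJ, ∃ x, x ∈ R ∧ a₀ * x = (z : L) := by
        intro z hz
        have hzJ : z ∈ J := hsJ ▸ Submodule.subset_span hz
        exact hzJ
      choose! xf hxfR hxfa using hsJmem
      refine ⟨t ∪ sJ.image xf, ?_⟩
      set C := Subring.closure ((K : Set L) ∪ ((t ∪ sJ.image xf : Finset L) : Set L))
        with hC
      have htC : Bc k ≤ C := by
        rw [ht]
        apply Subring.closure_le.mpr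
        rintro x (hx | hx)
        · exact Subring.subset_closure (Or.inl hx)
        · exact Subring.subset_closure
            (Or.inr (Finset.mem_coe.mpr (Finset.mem_union_left _ hx)))
      apply le_antisymm
      · rw [hBcSucc k]
        apply Subring.closure_le.mpr
        rintro x (hx | ⟨hxR, hxa⟩)
        · exact Subring.subset_closure (Or.inl hx)
        · have hzJ : (⟨a₀ * x, hxa⟩ : ↥(Bc k)) ∈ J := ⟨x, hxR, rfl⟩
          rw [← hsJ, Submodule.mem_span_finset] at hzJ
          obtain ⟨f, -, hf⟩ := hzJ
          have hfL : a₀ * x = ∑ z ∈ sJ, (f z : L) * (z : L) := by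
            have h0 := congrArg (Subtype.val) hf
            simp only [smul_eq_mul] at h0
            simpa using h0.symm
          have hfa : a₀ * x = a₀ * ∑ z ∈ sJ, (f z : L) * xf z := by
            rw [Finset.mul_sum, hfL]
            apply Finset.sum_congr rfl
            intro z hz
            rw [← hxfa z hz]; ring
          have hxeq : x = ∑ z ∈ sJ, (f z : L) * xf z := mul_left_cancel₀ ha₀ hfa
          rw [hxeq]
          apply Subring.sum_mem
          intro z hz
          refine C.mul_mem (htC (f z).2) (Subring.subset_closure ?_)
          exact Or.inr (Finset.mem_coe.mpr
            (Finset.mem_union_right _ (Finset.mem_image.mpr ⟨z, hz, rfl⟩)))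
      · apply Subring.closure_le.mpr
        rintro x (hx | hx)
        · rw [hBcSucc k]; exact Subring.subset_closure (Or.inl hx)
        · rw [Finset.mem_coe, Finset.mem_union] at hx
          rcases hx with hx | hx
          · refine hmono k ?_
            rw [ht]
            exact Subring.subset_closure (Or.inr hx)
          · rw [Finset.mem_image] at hx
            obtain ⟨z, hz, rfl⟩ := hx
            rw [hBcSucc k]
            refine Subring.subset_closure (Or.inr ⟨hxfR z hz, ?_⟩)
            rw [hxfa z hz]
            exact z.2
  · -- stabilization implies RG = Bc k
    intro k hk
    have hconst : ∀ j, k ≤ j → Bc j = Bc k := by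
      intro j hj
      induction j, hj using Nat.le_induction with
      | base => rfl
      | succ j hj ih => rw [hBcSucc j, ih, ← hBcSucc k, ← hk]
    apply le_antisymm
    · intro x hx
      have hx' : x ∈ ⋃ j : ℕ, (Bc j : Set L) := hunion ▸ hx
      obtain ⟨j, hj⟩ := Set.mem_iUnion.mp hx'
      rcases le_total j k with h | h
      · exact hmono' h hj
      · rw [← hconst j h]; exact hj
    · exact (hchain k).1
  · -- RG f.g. implies stabilization
    rintro ⟨s, hs⟩
    have hmem : ∀ x ∈ s, ∃ k, x ∈ Bc k := by
      intro x hx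
      have hxRG : x ∈ RG := by
        rw [hs]; exact Subring.subset_closure (Or.inr hx)
      have hx' : x ∈ ⋃ j : ℕ, (Bc j : Set L) := hunion ▸ hxRG
      exact Set.mem_iUnion.mp hx'
    choose! f hf using hmem
    set N := s.sup f with hN
    have hsN : ∀ x ∈ s, x ∈ Bc N := fun x hx =>
      hmono' (Finset.le_sup hx) (hf x hx)
    refine ⟨N, le_antisymm (hmono N) ?_⟩
    have h1 : RG ≤ Bc N := by
      rw [hs]
      apply Subring.closure_le.mpr
      rintro x (hx | hx)
      · exact hKBc N hx
      · exact hsN x hx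
    exact le_trans (hchain (N + 1)).1 h1

end Derksen
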